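/- If G is a graph with chromatic number q ≥ 2, then the Mycielskian M(G) has chromatic number exactly q + 1. -/
import Mathlib


open SimpleGraph

/-- The Mycielskian of a graph `G` on vertex set `V`: vertices are the old
vertices (`inl a` playing the role of `v_a`), the shadow vertices
(`inr (inl a)` playing the role of `u_a`) and the apex `inr (inr ())` = `w`. -/
def Mycielskian {V : Type} (G : SimpleGraph V) : SimpleGraph (V ⊕ V ⊕ Unit) :=
  SimpleGraph.fromRel (fun x y =>
    match x, y with
    | Sum.inl a, Sum.inl b => G.Adj a b
    | Sum.inl a, Sum.inr (Sum.inl b) => G.Adj a b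
    | Sum.inr (Sum.inl _), Sum.inr (Sum.inr _) => True
    | _, _ => False)

lemma mycielskian_colorable {V : Type} (G : SimpleGraph V) (q : ℕ)
    (h : G.Colorable q) : (Mycielskian G).Colorable (q + 1) := by
  obtain ⟨c⟩ := h
  refine ⟨SimpleGraph.Coloring.mk
    (fun x => match x with
      | Sum.inl a => (c a).castSucc
      | Sum.inr (Sum.inl a) => (c a).castSucc
      | Sum.inr (Sum.inr _) => Fin.last q) ?_⟩
  intro v w hadj
  rw [Mycielskian, SimpleGraph.fromRel_adj] at hadj
  obtain ⟨hne, h⟩ := hadj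
  match v, w with
  | Sum.inl a, Sum.inl b =>
    obtain h | h := h
    · simpa [Fin.castSucc_inj] using c.valid h
    · simpa [Fin.castSucc_inj] using (c.valid h).symm
  | Sum.inl a, Sum.inr (Sum.inl b) =>
    obtain h | h := h
    · simpa [Fin.castSucc_inj] using c.valid h
    · exact h.elim
  | Sum.inr (Sum.inl a), Sum.inl b =>
    obtain h | h := h
    · exact h.elim
    · simpa [Fin.castSucc_inj] using (c.valid h).symm
  | Sum.inl a, Sum.inr (Sum.inr _) => exact (h.elim id id).elim
  | Sum.inr (Sum.inr _), Sum.inl a => exact (h.elim id id).elim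
  | Sum.inr (Sum.inl a), Sum.inr (Sum.inl b) => exact (h.elim id id).elim
  | Sum.inr (Sum.inr _), Sum.inr (Sum.inr _) => exact (h.elim id id).elim
  | Sum.inr (Sum.inl a), Sum.inr (Sum.inr _) =>
    simp [Fin.ne_of_lt, Fin.castSucc_lt_last]
  | Sum.inr (Sum.inr _), Sum.inr (Sum.inl a) =>
    simp [(Fin.ne_of_lt (Fin.castSucc_lt_last (c a))).symm]

lemma mycielskian_not_colorable {V : Type} (G : SimpleGraph V) (q : ℕ)
    (hq : 1 ≤ q) (h : ¬ G.Colorable (q - 1)) : ¬ (Mycielskian G).Colorable q := by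
  rintro ⟨c⟩
  apply h
  set k : Fin q := c (Sum.inr (Sum.inr ())) with hk
  have hadj_vv : ∀ a b, G.Adj a b → (Mycielskian G).Adj (Sum.inl a) (Sum.inl b) := by
    intro a b hab
    rw [Mycielskian, SimpleGraph.fromRel_adj]
    exact ⟨by simpa using hab.ne, Or.inl hab⟩
  have hadj_vu : ∀ a b, G.Adj a b → (Mycielskian G).Adj (Sum.inl a) (Sum.inr (Sum.inl b)) := by
    intro a b hab
    rw [Mycielskian, SimpleGraph.fromRel_adj]
    exact ⟨by simp, Or.inl hab⟩
  have hadj_uw : ∀ a, (Mycielskian G).Adj (Sum.inr (Sum.inl a)) (Sum.inr (Sum.inr ())) := by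
    intro a
    rw [Mycielskian, SimpleGraph.fromRel_adj]
    exact ⟨by simp, Or.inl trivial⟩
  -- the new coloring of G avoiding color k
  set f : V → Fin q := fun a => if c (Sum.inl a) = k then c (Sum.inr (Sum.inl a)) else c (Sum.inl a)
    with hf
  have hfk : ∀ a, f a ≠ k := by
    intro a
    by_cases hca : c (Sum.inl a) = k
    · simpa [hf, hca] using c.valid (hadj_uw a)
    · simpa [hf, hca] using hca
  have hproper : ∀ {a b}, G.Adj a b → f a ≠ f b := by
    intro a b hab
    by_cases hca : c (Sum.inl a) = k <;> by_cases hcb : c (Sum.inl b) = k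
    · exact absurd (hca.trans hcb.symm) (c.valid (hadj_vv a b hab))
    · have := c.valid (hadj_vu b a hab.symm)
      simp only [hf, hca, hcb, if_pos, if_neg, if_true, if_false]
      exact fun h' => this (h'.symm)
    · have := c.valid (hadj_vu a b hab)
      simp only [hf, hca, hcb, if_pos, if_neg]
      exact this
    · have := c.valid (hadj_vv a b hab)
      simpa [hf, hca, hcb] using this
  -- build a coloring with colors ≠ k
  let c' : G.Coloring {x : Fin q // x ≠ k} :=
    SimpleGraph.Coloring.mk (fun a => ⟨f a, hfk a⟩)
      (fun hab => by simpa [Subtype.ext_iff] using hproper hab)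
  have := c'.colorable
  have hcard : Fintype.card {x : Fin q // x ≠ k} = q - 1 := by
    simp [Fintype.card_subtype_compl]
  rwa [hcard] at this

/-- If `G` is a graph with chromatic number `q ≥ 2`, then the Mycielskian `M(G)`
has chromatic number exactly `q + 1`. -/
theorem chromaticNumber_mycielskian {V : Type} (G : SimpleGraph V) (q : ℕ)
    (hq : 2 ≤ q) (hχ : G.chromaticNumber = (q : ℕ∞)) :
    (Mycielskian G).chromaticNumber = ((q + 1 : ℕ) : ℕ∞) := by
  have hcol : G.Colorable q := by
    rw [← SimpleGraph.chromaticNumber_le_iff_colorable, hχ]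
  have hnot : ¬ G.Colorable (q - 1) := by
    intro h
    have := h.chromaticNumber_le
    rw [hχ] at this
    have : (q : ℕ∞) ≤ (q - 1 : ℕ) := this
    have : q ≤ q - 1 := by exact_mod_cast this
    omega
  have h1 : (Mycielskian G).Colorable (q + 1) := mycielskian_colorable G q hcol
  have h2 : ¬ (Mycielskian G).Colorable q := mycielskian_not_colorable G q (by omega) hnot
  apply le_antisymm
  · exact_mod_cast h1.chromaticNumber_le
  · rw [← SimpleGraph.chromaticNumber_le_iff_colorable] at h2
    push_neg at h2
    exact_mod_cast Order.add_one_le_of_lt h2
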